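/- The element a_{124}a_{123}a_{124}a_{123} is a nontrivial element of the group G_4^3. -/
import Mathlib


/-- Index set: 3-element subsets of `{1,...,n}` (modeled as `Fin n`). -/
abbrev Gn3Idx (n : ℕ) := {m : Finset (Fin n) // m.card = 3}

/-- Defining relations of the group `Gₙ³`: squares of generators, far-commutativity
for triples sharing at most one index, and the tetrahedron (octagon) relation. -/
def Gn3Rels (n : ℕ) : Set (FreeGroup (Gn3Idx n)) :=
  {r | (∃ m : Gn3Idx n, r = (FreeGroup.of m) ^ 2) ∨
    (∃ m m' : Gn3Idx n, (m.1 ∩ m'.1).card ≤ 1 ∧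
      r = FreeGroup.of m * FreeGroup.of m' * (FreeGroup.of m)⁻¹ * (FreeGroup.of m')⁻¹) ∨
    (∃ (i j k l : Fin n) (h1 : ({i, j, k} : Finset (Fin n)).card = 3)
        (h2 : ({i, j, l} : Finset (Fin n)).card = 3)
        (h3 : ({i, k, l} : Finset (Fin n)).card = 3)
        (h4 : ({j, k, l} : Finset (Fin n)).card = 3),
      List.Pairwise (· ≠ ·) [i, j, k, l] ∧
      r = FreeGroup.of ⟨{i, j, k}, h1⟩ * FreeGroup.of ⟨{i, j, l}, h2⟩ *
          FreeGroup.of ⟨{i, k, l}, h3⟩ * FreeGroup.of ⟨{j, k, l}, h4⟩ *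
          (FreeGroup.of ⟨{j, k, l}, h4⟩ * FreeGroup.of ⟨{i, k, l}, h3⟩ *
           FreeGroup.of ⟨{i, j, l}, h2⟩ * FreeGroup.of ⟨{i, j, k}, h1⟩)⁻¹)}

/-- The group `Gₙ³`. -/
abbrev Gn3 (n : ℕ) := PresentedGroup (Gn3Rels n)

/-- The generator `a_m` of `Gₙ³`. -/
def Gn3.gen {n : ℕ} (m : Gn3Idx n) : Gn3 n := PresentedGroup.of m


/-- Auxiliary map to the dihedral group `D₈` sending the triple omitting `t`
to the reflection `sr (2*t)`. -/
def g43 (s : Finset (Fin 4)) : DihedralGroup 8 :=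
  if (0 : Fin 4) ∉ s then .sr 0
  else if (1 : Fin 4) ∉ s then .sr 2
  else if (2 : Fin 4) ∉ s then .sr 4
  else .sr 6

lemma g43_rels : ∀ r ∈ Gn3Rels 4, FreeGroup.lift (fun m : Gn3Idx 4 => g43 m.1) r = 1 := by
  rintro r (⟨m, rfl⟩ | ⟨m, m', hm, rfl⟩ | ⟨i, j, k, l, h1, h2, h3, h4, hp, rfl⟩)
  · simp only [map_pow, FreeGroup.lift_apply_of]
    revert m; decide
  · exact absurd hm (by revert m m'; decide)
  · simp only [map_mul, map_inv, FreeGroup.lift_apply_of, mul_inv_rev, inv_inv]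
    have := (by decide : ∀ i j k l : Fin 4, List.Pairwise (· ≠ ·) [i, j, k, l] →
      g43 {i,j,k} * g43 {i,j,l} * g43 {i,k,l} * g43 {j,k,l} =
      g43 {j,k,l} * g43 {i,k,l} * g43 {i,j,l} * g43 {i,j,k}) i j k l hp
    rw [this]
    group

/-- The homomorphism `G₄³ → D₈`. -/
def φ43 : Gn3 4 →* DihedralGroup 8 := PresentedGroup.toGroup g43_rels

/-- The element `a_{124} a_{123} a_{124} a_{123}` is a nontrivial element of `G₄³`.
(Indices `1,2,3,4` are modeled as `0,1,2,3 : Fin 4`.) -/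
theorem nontrivial_element_G43 :
    Gn3.gen (⟨{0, 1, 3}, by decide⟩ : Gn3Idx 4) * Gn3.gen ⟨{0, 1, 2}, by decide⟩ *
    Gn3.gen ⟨{0, 1, 3}, by decide⟩ * Gn3.gen ⟨{0, 1, 2}, by decide⟩ ≠ 1 := by
  intro h
  have := congrArg φ43 h
  simp only [map_mul, map_one, Gn3.gen, φ43, PresentedGroup.toGroup.of] at this
  revert this
  decide
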